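/- Assume m is even and l′ = 2m+1 is odd (case (i)). Let λ ∈ ℂ with λ^{2m+2} = 1 and λ ≠ 1, and let v = v^λ ∈ ℂ^{l+1} be as defined in the context. Then v ≠ 0 and v is a λ-eigenvector for the permutation action of s on ℂ^{l+1}: v_{s^{−1}(j)} = λ·v_j for all 1 ≤ j ≤ l+1. -/

import Mathlib

/- Common framework: type A_l root system realized in ℝ^{ℕ} (coordinates 1,…,l+1 used),
   the Weyl group as permutations of ℕ acting by permuting coordinates, and the
   Weyl group element s = s₁s₂ of Proposition 4.2 (all four parity cases). -/

noncomputable section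

namespace DPW

/-- The ambient vector space (only coordinates 1,…,l+1 are used). -/
abbrev V : Type := ℕ → ℝ

/-- Standard basis vector e_i. -/
def evec (i : ℕ) : V := fun j => if j = i then 1 else 0

/-- The root e_i − e_j. -/
def rt (i j : ℕ) : V := evec i - evec j

/-- The root system Δ of type A_l. -/
def Delta (l : ℕ) : Set V :=
  {v | ∃ i j, 1 ≤ i ∧ i ≤ l + 1 ∧ 1 ≤ j ∧ j ≤ l + 1 ∧ i ≠ j ∧ v = rt i j}

/-- Positive roots Δ₊. -/
def DeltaPos (l : ℕ) : Set V :=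
  {v | ∃ i j, 1 ≤ i ∧ i < j ∧ j ≤ l + 1 ∧ v = rt i j}

/-- Negative roots Δ₋ = −Δ₊. -/
def DeltaNeg (l : ℕ) : Set V := {v | -v ∈ DeltaPos l}

/-- Action of a permutation on V : (σ·v)_j = v_{σ⁻¹(j)}. -/
def pact (σ : Equiv.Perm ℕ) (v : V) : V := fun j => v (σ⁻¹ j)

/-- row(e_a − e_b) = a. -/
def rowOf (v : V) : ℕ := sInf {a | v a = 1}

/-- col(e_a − e_b) = b. -/
def colOf (v : V) : ℕ := sInf {b | v b = (-1 : ℝ)}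

/-- Product of the simple reflections s_{α_i} = (i, i+1) for i in a list. -/
def swapProd (idxs : List ℕ) : Equiv.Perm ℕ :=
  (idxs.map (fun i => Equiv.swap i (i + 1))).prod

/-- The Weyl group element s = s₁s₂ (cases (i)–(iv) according to the parities of
    m = ⌊(l′−1)/2⌋ and l′; here p = l − l′ and s_γ = (m+1, m+p+2)). -/
def weylS (l l' : ℕ) : Equiv.Perm ℕ :=
  let m := (l' - 1) / 2
  let p := l - l'
  if m % 2 = 0 then
    if l' % 2 = 1 then
      -- case (i)
      (swapProd (List.range' 2 (m / 2) 2) * swapProd (List.range' (m + p + 2) (m / 2) 2)) *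
        (swapProd (List.range' 1 (m / 2) 2) * Equiv.swap (m + 1) (m + p + 2) *
          swapProd (List.range' (m + p + 3) (m / 2) 2))
    else
      -- case (ii)
      (swapProd (List.range' 2 (m / 2) 2) * swapProd (List.range' (m + p + 2) (m / 2 + 1) 2)) *
        (swapProd (List.range' 1 (m / 2) 2) * Equiv.swap (m + 1) (m + p + 2) *
          swapProd (List.range' (m + p + 3) (m / 2) 2))
  else
    if l' % 2 = 1 then
      -- case (iii)
      (swapProd (List.range' 1 ((m + 1) / 2) 2) *
          swapProd (List.range' (m + p + 2) ((m + 1) / 2) 2)) *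
        (swapProd (List.range' 2 ((m - 1) / 2) 2) * Equiv.swap (m + 1) (m + p + 2) *
          swapProd (List.range' (m + p + 3) ((m - 1) / 2) 2))
    else
      -- case (iv)
      (swapProd (List.range' 1 ((m + 1) / 2) 2) *
          swapProd (List.range' (m + p + 2) ((m + 1) / 2) 2)) *
        (swapProd (List.range' 2 ((m - 1) / 2) 2) * Equiv.swap (m + 1) (m + p + 2) *
          swapProd (List.range' (m + p + 3) ((m + 1) / 2) 2))

/-- Δ_s = {α ∈ Δ₊ : sα ∈ Δ₋}. -/
def DeltaS (l : ℕ) (s : Equiv.Perm ℕ) : Set V :=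
  {v ∈ DeltaPos l | pact s v ∈ DeltaNeg l}

/-- Δ_{s⁻¹} = {α ∈ Δ₊ : s⁻¹α ∈ Δ₋}. -/
def DeltaSinv (l : ℕ) (s : Equiv.Perm ℕ) : Set V :=
  {v ∈ DeltaPos l | pact s⁻¹ v ∈ DeltaNeg l}

/-- (Δ̄_K)₊ = {α ∈ Δ₊ : sα ≠ α}. -/
def DeltaKpos (l : ℕ) (s : Equiv.Perm ℕ) : Set V :=
  {v ∈ DeltaPos l | pact s v ≠ v}

/-- (Δ̄_K)₋ = −(Δ̄_K)₊. -/
def DeltaKneg (l : ℕ) (s : Equiv.Perm ℕ) : Set V := {v | -v ∈ DeltaKpos l s}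

/-- Δ^C = {α ∈ (Δ̄_K)₊ : row(sα) = row(α)}. -/
def DeltaC (l : ℕ) (s : Equiv.Perm ℕ) : Set V :=
  {v ∈ DeltaKpos l s | rowOf (pact s v) = rowOf v}

/-- Δ^R = {α ∈ (Δ̄_K)₊ : col(sα) = col(α)}. -/
def DeltaR (l : ℕ) (s : Equiv.Perm ℕ) : Set V :=
  {v ∈ DeltaKpos l s | colOf (pact s v) = colOf v}

/-- Δ^O = (Δ̄_K)₊ \ (Δ^C ∪ Δ^R). -/
def DeltaO (l : ℕ) (s : Equiv.Perm ℕ) : Set V :=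
  DeltaKpos l s \ (DeltaC l s ∪ DeltaR l s)

/-- Δ₁^O = {α ∈ Δ^O : row(α) ≥ m+p+2}. -/
def DeltaO1 (l : ℕ) (s : Equiv.Perm ℕ) (m p : ℕ) : Set V :=
  {v ∈ DeltaO l s | m + p + 2 ≤ rowOf v}

/-- Δ₂^O = {α ∈ Δ^O : col(α) ≤ m+1}. -/
def DeltaO2 (l : ℕ) (s : Equiv.Perm ℕ) (m : ℕ) : Set V :=
  {v ∈ DeltaO l s | colOf v ≤ m + 1}

/-- Δ₃^O = Δ^O \ (Δ₁^O ∪ Δ₂^O). -/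
def DeltaO3 (l : ℕ) (s : Equiv.Perm ℕ) (m p : ℕ) : Set V :=
  DeltaO l s \ (DeltaO1 l s m p ∪ DeltaO2 l s m)

/-- Δ̄_K^k = {α ∈ (Δ̄_K)₊ : s^{−j}α ∈ (Δ̄_K)₊ for 1 ≤ j ≤ k−1 and s^{−k}α ∈ (Δ̄_K)₋}. -/
def DeltaKk (l : ℕ) (s : Equiv.Perm ℕ) (k : ℕ) : Set V :=
  {v ∈ DeltaKpos l s |
    (∀ j, 1 ≤ j → j ≤ k - 1 → pact (s⁻¹ ^ j) v ∈ DeltaKpos l s) ∧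
      pact (s⁻¹ ^ k) v ∈ DeltaKneg l s}

/-- d(α) = min{k ≥ 1 : s^{−k}α ∈ Δ₋}. -/
def dd (l : ℕ) (s : Equiv.Perm ℕ) (v : V) : ℕ :=
  sInf {k | 1 ≤ k ∧ pact (s⁻¹ ^ k) v ∈ DeltaNeg l}

/-- Δ_Z = {e_i − e_j : m+2 ≤ i, j ≤ m+p+1, i ≠ j}. -/
def DeltaZ (m p : ℕ) : Set V :=
  {v | ∃ i j, m + 2 ≤ i ∧ i ≤ m + p + 1 ∧ m + 2 ≤ j ∧ j ≤ m + p + 1 ∧ i ≠ j ∧ v = rt i j}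

/-- The ⟨s⟩-orbit of a vector. -/
def orbitOf (s : Equiv.Perm ℕ) (v : V) : Set V := {w | ∃ n : ℤ, w = pact (s ^ n) v}

/-- The set P_κ (for κ ∈ Δ̄_K^k). -/
def Pk (l : ℕ) (s : Equiv.Perm ℕ) (k : ℕ) (κ : V) : Set (V × V) :=
  {q | (∃ i, 2 ≤ i ∧ i ≤ k - 1 ∧ q.1 ∈ DeltaKk l s i) ∧ q.2 ∈ DeltaKk l s k ∧ κ = q.1 + q.2}

/-- The set P′_κ (for κ ∈ Δ̄_K^k). -/
def Pk' (l : ℕ) (s : Equiv.Perm ℕ) (k : ℕ) (κ : V) : Set (V × V) :=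
  {q | q.1 ∈ DeltaKk l s k ∧ q.2 ∈ DeltaKk l s k ∧ κ = q.1 + q.2}

/-- The eigenvector v^λ of case (i) (m even, l′ = 2m+1 odd). -/
def vlam (m p : ℕ) (lam : ℂ) : ℕ → ℂ := fun j =>
  if j = 0 then 0
  else if j ≤ m + 1 then
    (if j % 2 = 1 then lam ^ ((4 * m + 5 - j) / 2) else lam ^ (j / 2))
  else if j ≤ m + p + 1 then 0
  else if j ≤ m + p + m + 2 then
    (if (j - (m + p)) % 2 = 0 then lam ^ ((m + (j - (m + p))) / 2)
     else lam ^ ((3 * m + 5 - (j - (m + p))) / 2))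
  else 0


lemma swapProd_apply (a n j : ℕ) :
    swapProd (List.range' a n 2) j =
      if a ≤ j ∧ j < a + 2 * n then (if (j - a) % 2 = 0 then j + 1 else j - 1) else j := by
  induction n generalizing a with
  | zero =>
    have h : swapProd (List.range' a 0 2) = 1 := rfl
    rw [h, if_neg (by omega)]; rfl
  | succ n ih =>
    have h : List.range' a (n+1) 2 = a :: List.range' (a+2) n 2 := rfl
    rw [h]
    have h2 : swapProd (a :: List.range' (a+2) n 2) j
        = Equiv.swap a (a+1) (swapProd (List.range' (a+2) n 2) j) := rfl
    rw [h2, ih]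
    by_cases h1 : a + 2 ≤ j ∧ j < a + 2 + 2 * n
    · rw [if_pos h1]
      by_cases hp2 : (j - (a+2)) % 2 = 0
      · rw [if_pos hp2, Equiv.swap_apply_of_ne_of_ne (by omega) (by omega),
          if_pos (by omega), if_pos (by omega)]
      · rw [if_neg hp2, Equiv.swap_apply_of_ne_of_ne (by omega) (by omega),
          if_pos (by omega), if_neg (by omega)]
    · rw [if_neg h1]
      by_cases hja : j = a
      · subst hja
        rw [Equiv.swap_apply_left, if_pos ⟨le_refl _, by omega⟩, if_pos (by omega)]
      · by_cases hja1 : j = a + 1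
        · subst hja1
          rw [Equiv.swap_apply_right, if_pos (by omega), if_neg (by omega)]
          omega
        · rw [Equiv.swap_apply_of_ne_of_ne hja hja1, if_neg (by omega)]

lemma sp_lt (a n j : ℕ) (h : j < a) : swapProd (List.range' a n 2) j = j := by
  rw [swapProd_apply, if_neg (by omega)]

lemma sp_ge (a n j : ℕ) (h : a + 2*n ≤ j) : swapProd (List.range' a n 2) j = j := by
  rw [swapProd_apply, if_neg (by omega)]

lemma sp_up (a n j : ℕ) (h1 : a ≤ j) (h2 : j < a + 2*n) (h3 : (j - a) % 2 = 0) :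
    swapProd (List.range' a n 2) j = j + 1 := by
  rw [swapProd_apply, if_pos ⟨h1, h2⟩, if_pos h3]

lemma sp_down (a n j : ℕ) (h1 : a ≤ j) (h2 : j < a + 2*n) (h3 : (j - a) % 2 = 1) :
    swapProd (List.range' a n 2) j = j - 1 := by
  rw [swapProd_apply, if_pos ⟨h1, h2⟩, if_neg (by omega)]

lemma swapProd_inv_apply (a n j : ℕ) :
    (swapProd (List.range' a n 2))⁻¹ j = swapProd (List.range' a n 2) j := by
  have hsq : swapProd (List.range' a n 2) (swapProd (List.range' a n 2) j) = j := by
    by_cases h1 : a ≤ j ∧ j < a + 2*n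
    · by_cases h2 : (j - a) % 2 = 0
      · rw [sp_up a n j h1.1 h1.2 h2, sp_down a n (j+1) (by omega) (by omega) (by omega)]
        omega
      · rw [sp_down a n j h1.1 h1.2 (by omega), sp_up a n (j-1) (by omega) (by omega) (by omega)]
        omega
    · have e : swapProd (List.range' a n 2) j = j := by rw [swapProd_apply, if_neg h1]
      rw [e, e]
  nth_rewrite 1 [← hsq]
  exact Equiv.symm_apply_apply _ _

lemma vlam_odd_lo (m p : ℕ) (lam : ℂ) (j : ℕ) (h0 : j % 2 = 1) (h2 : j ≤ m + 1) :
    vlam m p lam j = lam ^ ((4 * m + 5 - j) / 2) := by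
  simp only [vlam]
  rw [if_neg (by omega), if_pos h2, if_pos h0]

lemma vlam_even_lo (m p : ℕ) (lam : ℂ) (j : ℕ) (h0 : j % 2 = 0) (h1 : 1 ≤ j) (h2 : j ≤ m + 1) :
    vlam m p lam j = lam ^ (j / 2) := by
  simp only [vlam]
  rw [if_neg (by omega), if_pos h2, if_neg (by omega)]

lemma vlam_mid (m p : ℕ) (lam : ℂ) (j : ℕ) (h1 : m + 2 ≤ j) (h2 : j ≤ m + p + 1) :
    vlam m p lam j = 0 := by
  simp only [vlam]
  rw [if_neg (by omega), if_neg (by omega), if_pos h2]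

lemma vlam_even_hi (m p : ℕ) (lam : ℂ) (j : ℕ) (h0 : (j - (m + p)) % 2 = 0)
    (h1 : m + p + 2 ≤ j) (h2 : j ≤ m + p + m + 2) :
    vlam m p lam j = lam ^ ((m + (j - (m + p))) / 2) := by
  simp only [vlam]
  rw [if_neg (by omega), if_neg (by omega), if_neg (by omega), if_pos h2, if_pos h0]

lemma vlam_odd_hi (m p : ℕ) (lam : ℂ) (j : ℕ) (h0 : (j - (m + p)) % 2 = 1)
    (h1 : m + p + 2 ≤ j) (h2 : j ≤ m + p + m + 2) :
    vlam m p lam j = lam ^ ((3 * m + 5 - (j - (m + p))) / 2) := by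
  simp only [vlam]
  rw [if_neg (by omega), if_neg (by omega), if_neg (by omega), if_pos h2, if_neg (by omega)]


/-- in case (i) (m even, l′ = 2m+1 odd), for any λ with λ^{2m+2} = 1 and
λ ≠ 1, the vector v^λ is a nonzero λ-eigenvector for the permutation action of s. -/
theorem stmt1 (l l' m p : ℕ) (h5 : 5 ≤ l') (hll : l' ≤ l)
    (hm : m = (l' - 1) / 2) (hp : p = l - l')
    (hme : m % 2 = 0) (hlo : l' % 2 = 1)
    (lam : ℂ) (hroot : lam ^ (2 * m + 2) = 1) (hne : lam ≠ 1) :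
    vlam m p lam ≠ 0 ∧
      ∀ j, 1 ≤ j → j ≤ l + 1 →
        vlam m p lam ((weylS l l')⁻¹ j) = lam * vlam m p lam j := by
  have hl' : l' = 2 * m + 1 := by omega
  have hm2 : 2 ≤ m := by omega
  have hlam0 : lam ≠ 0 := by
    intro h
    rw [h, zero_pow (by omega)] at hroot
    exact one_ne_zero hroot.symm
  have hS : weylS l l' =
      (swapProd (List.range' 2 (m / 2) 2) * swapProd (List.range' (m + p + 2) (m / 2) 2)) *
        (swapProd (List.range' 1 (m / 2) 2) * Equiv.swap (m + 1) (m + p + 2) *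
          swapProd (List.range' (m + p + 3) (m / 2) 2)) := by
    simp only [weylS]
    rw [← hm, ← hp, if_pos hme, if_pos hlo]
  have happ : ∀ x, (weylS l l')⁻¹ x =
      swapProd (List.range' (m+p+3) (m/2) 2)
        (Equiv.swap (m+1) (m+p+2)
          (swapProd (List.range' 1 (m/2) 2)
            (swapProd (List.range' (m+p+2) (m/2) 2)
              (swapProd (List.range' 2 (m/2) 2) x)))) := by
    intro x
    rw [hS]
    simp only [mul_inv_rev, Equiv.Perm.mul_apply, swapProd_inv_apply, Equiv.swap_inv]
  constructor
  · intro h0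
    have h2 := congrFun h0 2
    rw [vlam_even_lo m p lam 2 (by omega) (by omega) (by omega)] at h2
    simp only [Pi.zero_apply] at h2
    rw [show (2:ℕ)/2 = 1 by norm_num, pow_one] at h2
    exact hlam0 h2
  · intro j hj1 hjl
    have hj2 : j ≤ 2*m+p+2 := by omega
    rw [happ j]
    by_cases hc1 : j = 1
    · subst hc1
      rw [sp_lt 2 (m/2) 1 (by omega),
          sp_lt (m+p+2) (m/2) 1 (by omega),
          sp_up 1 (m/2) 1 (by omega) (by omega) (by omega),
          Equiv.swap_apply_of_ne_of_ne (show (1+1:ℕ) ≠ m+1 by omega) (show (1+1:ℕ) ≠ m+p+2 by omega),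
          sp_lt (m+p+3) (m/2) (1+1) (by omega),
          vlam_even_lo m p lam (1+1) (by omega) (by omega) (by omega),
          vlam_odd_lo m p lam 1 (by omega) (by omega)]
      rw [show (4*m+5-1)/2 = 2*m+2 by omega, hroot,
          show (1+1)/2 = 1 by norm_num, pow_one, mul_one]
    · by_cases hc2 : j % 2 = 0 ∧ j + 2 ≤ m
      · rw [sp_up 2 (m/2) j (by omega) (by omega) (by omega),
            sp_lt (m+p+2) (m/2) (j+1) (by omega),
            sp_up 1 (m/2) (j+1) (by omega) (by omega) (by omega),
            Equiv.swap_apply_of_ne_of_ne (show j+1+1 ≠ m+1 by omega) (show j+1+1 ≠ m+p+2 by omega),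
            sp_lt (m+p+3) (m/2) (j+1+1) (by omega),
            vlam_even_lo m p lam (j+1+1) (by omega) (by omega) (by omega),
            vlam_even_lo m p lam j (by omega) (by omega) (by omega)]
        rw [show (j+1+1)/2 = j/2 + 1 by omega, pow_succ]
        ring
      · by_cases hc3 : j = m
        · rw [sp_up 2 (m/2) j (by omega) (by omega) (by omega),
              sp_lt (m+p+2) (m/2) (j+1) (by omega),
              sp_ge 1 (m/2) (j+1) (by omega),
              show j+1 = m+1 by omega, Equiv.swap_apply_left,
              sp_lt (m+p+3) (m/2) (m+p+2) (by omega),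
              vlam_even_hi m p lam (m+p+2) (by omega) (by omega) (by omega),
              vlam_even_lo m p lam j (by omega) (by omega) (by omega)]
          rw [show (m + (m+p+2-(m+p)))/2 = j/2 + 1 by omega, pow_succ]
          ring
        · by_cases hc4 : j % 2 = 1 ∧ j ≤ m + 1
          · rw [sp_down 2 (m/2) j (by omega) (by omega) (by omega),
                sp_lt (m+p+2) (m/2) (j-1) (by omega),
                sp_down 1 (m/2) (j-1) (by omega) (by omega) (by omega),
                Equiv.swap_apply_of_ne_of_ne (show j-1-1 ≠ m+1 by omega) (show j-1-1 ≠ m+p+2 by omega),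
                sp_lt (m+p+3) (m/2) (j-1-1) (by omega),
                vlam_odd_lo m p lam (j-1-1) (by omega) (by omega),
                vlam_odd_lo m p lam j (by omega) (by omega)]
            rw [show (4*m+5-(j-1-1))/2 = (4*m+5-j)/2 + 1 by omega, pow_succ]
            ring
          · by_cases hc5 : j ≤ m + p + 1
            · have hlo5 : m + 2 ≤ j := by omega
              rw [sp_ge 2 (m/2) j (by omega),
                  sp_lt (m+p+2) (m/2) j (by omega),
                  sp_ge 1 (m/2) j (by omega),
                  Equiv.swap_apply_of_ne_of_ne (show j ≠ m+1 by omega) (show j ≠ m+p+2 by omega),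
                  sp_lt (m+p+3) (m/2) j (by omega),
                  vlam_mid m p lam j (by omega) (by omega)]
              ring
            · have hge : m + p + 2 ≤ j := by omega
              by_cases hc6 : (j - (m+p)) % 2 = 0 ∧ j ≤ m+p+m
              · rw [sp_ge 2 (m/2) j (by omega),
                    sp_up (m+p+2) (m/2) j (by omega) (by omega) (by omega),
                    sp_ge 1 (m/2) (j+1) (by omega),
                    Equiv.swap_apply_of_ne_of_ne (show j+1 ≠ m+1 by omega) (show j+1 ≠ m+p+2 by omega),
                    sp_up (m+p+3) (m/2) (j+1) (by omega) (by omega) (by omega),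
                    vlam_even_hi m p lam (j+1+1) (by omega) (by omega) (by omega),
                    vlam_even_hi m p lam j (by omega) (by omega) (by omega)]
                rw [show (m + (j+1+1-(m+p)))/2 = (m + (j-(m+p)))/2 + 1 by omega, pow_succ]
                ring
              · by_cases hc7 : j = m+p+3
                · rw [sp_ge 2 (m/2) j (by omega),
                      sp_down (m+p+2) (m/2) j (by omega) (by omega) (by omega),
                      show j - 1 = m+p+2 by omega,
                      sp_ge 1 (m/2) (m+p+2) (by omega),
                      Equiv.swap_apply_right,
                      sp_lt (m+p+3) (m/2) (m+1) (by omega),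
                      vlam_odd_lo m p lam (m+1) (by omega) (by omega),
                      vlam_odd_hi m p lam j (by omega) (by omega) (by omega)]
                  rw [show (4*m+5-(m+1))/2 = (3*m+5-(j-(m+p)))/2 + 1 by omega, pow_succ]
                  ring
                · by_cases hc8 : (j - (m+p)) % 2 = 1 ∧ j ≤ m+p+m+1
                  · rw [sp_ge 2 (m/2) j (by omega),
                        sp_down (m+p+2) (m/2) j (by omega) (by omega) (by omega),
                        sp_ge 1 (m/2) (j-1) (by omega),
                        Equiv.swap_apply_of_ne_of_ne (show j-1 ≠ m+1 by omega) (show j-1 ≠ m+p+2 by omega),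
                        sp_down (m+p+3) (m/2) (j-1) (by omega) (by omega) (by omega),
                        vlam_odd_hi m p lam (j-1-1) (by omega) (by omega) (by omega),
                        vlam_odd_hi m p lam j (by omega) (by omega) (by omega)]
                    rw [show (3*m+5-(j-1-1-(m+p)))/2 = (3*m+5-(j-(m+p)))/2 + 1 by omega, pow_succ]
                    ring
                  · by_cases hc9 : j = m+p+m+2
                    · rw [sp_ge 2 (m/2) j (by omega),
                          sp_ge (m+p+2) (m/2) j (by omega),
                          sp_ge 1 (m/2) j (by omega),
                          Equiv.swap_apply_of_ne_of_ne (show j ≠ m+1 by omega) (show j ≠ m+p+2 by omega),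
                          sp_down (m+p+3) (m/2) j (by omega) (by omega) (by omega),
                          vlam_odd_hi m p lam (j-1) (by omega) (by omega) (by omega),
                          vlam_even_hi m p lam j (by omega) (by omega) (by omega)]
                      rw [show (3*m+5-(j-1-(m+p)))/2 = (m + (j-(m+p)))/2 + 1 by omega, pow_succ]
                      ring
                    · exfalso
                      omega
end DPW
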